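/- Let B be a von Neumann subalgebra of a finite von Neumann algebra M and let v ∈ GN⁽¹⁾_M(B) be an intertwiner. (1) v*e_Bv is a projection in (B' ∩ ⟨M,e_B⟩)v*v, i.e., v*e_Bv is a projection commuting with v*vBv*v and dominated by v*v. (2) If q ∈ B is a projection, then v*e_Bv lies in (B' ∩ ⟨M,e_B⟩)q if and only if v*v ∈ Z(B)q = Z(qBq). -/

import Mathlib

open scoped ENNReal

noncomputable section

variable {H : Type*} [NormedAddCommGroup H] [InnerProductSpace ℂ H] [CompleteSpace H]
variable {H' : Type*} [NormedAddCommGroup H'] [InnerProductSpace ℂ H'] [CompleteSpace H']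
variable {K : Type*} [NormedAddCommGroup K] [InnerProductSpace ℂ K] [CompleteSpace K]

namespace IntertwinerAux

local notation "⟪" x ", " y "⟫" => @inner ℂ _ _ x y

/-- The orthogonal projection onto a submodule, as an endomorphism of `H`. -/
def projOf (W : Submodule ℂ H) [Submodule.HasOrthogonalProjection W] : H →L[ℂ] H :=
  W.subtypeL.comp W.orthogonalProjectionOnto

variable (W : Submodule ℂ H) [Submodule.HasOrthogonalProjection W]

lemma projOf_apply_mem (x : H) : projOf W x ∈ W := (W.orthogonalProjectionOnto x).2

lemma projOf_eq_self {x : H} (hx : x ∈ W) : projOf W x = x :=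
  Submodule.starProjection_eq_self_iff.mpr hx

lemma projOf_isSelfAdjoint : IsSelfAdjoint (projOf W) :=
  ContinuousLinearMap.isSelfAdjoint_iff_isSymmetric.mpr fun x y =>
    Submodule.inner_starProjection_left_eq_right W x y

lemma projOf_eq_zero {x : H} (hx : ∀ y ∈ W, ⟪y, x⟫ = 0) : projOf W x = 0 := by
  have hmem : x ∈ Wᗮ := (Submodule.mem_orthogonal W x).mpr hx
  show (W.subtypeL (W.orthogonalProjectionOnto x) : H) = 0
  rw [Submodule.orthogonalProjectionOnto_apply_of_mem_orthogonal hmem]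
  simp

lemma projOf_comm {A : H →L[ℂ] H} (h1 : ∀ x ∈ W, A x ∈ W) (h2 : ∀ x ∈ W, star A x ∈ W) :
    A * projOf W = projOf W * A := by
  ext η
  have hsub : η - projOf W η ∈ Wᗮ := Submodule.sub_starProjection_mem_orthogonal η
  have h3 : ∀ y ∈ W, ⟪y, A (η - projOf W η)⟫ = 0 := by
    intro y hy
    have hadj : ⟪(ContinuousLinearMap.adjoint A) y, η - projOf W η⟫
        = ⟪y, A (η - projOf W η)⟫ := ContinuousLinearMap.adjoint_inner_left A _ y
    rw [← hadj]
    refine hsub _ ?_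
    rw [← ContinuousLinearMap.star_eq_adjoint]
    exact h2 y hy
  have h4 : projOf W (A (η - projOf W η)) = 0 := projOf_eq_zero W h3
  have h5 : projOf W (A (projOf W η)) = A (projOf W η) :=
    projOf_eq_self W (h1 _ (projOf_apply_mem W η))
  calc (A * projOf W) η = A (projOf W η) := rfl
    _ = projOf W (A (projOf W η)) + projOf W (A (η - projOf W η)) := by rw [h4, h5, add_zero]
    _ = projOf W (A (projOf W η) + A (η - projOf W η)) := (map_add _ _ _).symm
    _ = projOf W (A η) := by rw [← map_add, add_sub_cancel]
    _ = (projOf W * A) η := rfl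

lemma mapsTo_closureSpan {G G₂ : Set H} (A : H →L[ℂ] H)
    (h : ∀ x ∈ G, A x ∈ (Submodule.span ℂ G₂).topologicalClosure) :
    ∀ x ∈ (Submodule.span ℂ G).topologicalClosure,
      A x ∈ (Submodule.span ℂ G₂).topologicalClosure := by
  intro x hx
  have hcl : IsClosed (((Submodule.span ℂ G₂).topologicalClosure : Submodule ℂ H) : Set H) :=
    Submodule.isClosed_topologicalClosure _
  have hK : Submodule.span ℂ G ≤
      ((Submodule.span ℂ G₂).topologicalClosure).comap (A : H →ₗ[ℂ] H) := by
    rw [Submodule.span_le]; exact fun y hy => h y hy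
  have hle : (Submodule.span ℂ G).topologicalClosure ≤
      ((Submodule.span ℂ G₂).topologicalClosure).comap (A : H →ₗ[ℂ] H) :=
    Submodule.topologicalClosure_minimal _ hK (hcl.preimage A.continuous)
  exact hle hx

lemma eqZero_on_closureSpan {G : Set H} (A : H →L[ℂ] H) (h : ∀ x ∈ G, A x = 0) :
    ∀ x ∈ (Submodule.span ℂ G).topologicalClosure, A x = 0 := by
  intro x hx
  have hker : Submodule.span ℂ G ≤ A.ker := by
    rw [Submodule.span_le]; intro y hy; exact h y hy
  have hle : (Submodule.span ℂ G).topologicalClosure ≤ A.ker :=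
    Submodule.topologicalClosure_minimal _ hker (ContinuousLinearMap.isClosed_ker A)
  exact hle hx

lemma comm_of_invariant {C : Set H} (e A : H →L[ℂ] H)
    (hsa : IsSelfAdjoint e) (hee : e * e = e)
    (hran : ∀ y, e y ∈ C) (hfix : ∀ z ∈ C, e z = z)
    (hA : ∀ z ∈ C, A z ∈ C) (hA' : ∀ z ∈ C, star A z ∈ C) :
    e * A = A * e := by
  have hsymm : ∀ x y, ⟪e x, y⟫ = ⟪x, e y⟫ :=
    ContinuousLinearMap.isSelfAdjoint_iff_isSymmetric.mp hsa
  have hzero : ∀ ζ, (∀ z ∈ C, ⟪z, ζ⟫ = 0) → e ζ = 0 := by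
    intro ζ hζ
    have h1 : ⟪e (e ζ), ζ⟫ = ⟪e ζ, e ζ⟫ := hsymm (e ζ) ζ
    have h2 : e (e ζ) = e ζ := by
      have := congrArg (fun (T : H →L[ℂ] H) => T ζ) hee
      simpa using this
    rw [h2] at h1
    rw [hζ (e ζ) (hran ζ)] at h1
    exact inner_self_eq_zero.mp h1.symm
  ext η
  have hperp : ∀ z ∈ C, ⟪z, η - e η⟫ = 0 := by
    intro z hz
    rw [inner_sub_right, ← hsymm z η, hfix z hz, sub_self]
  have hAperp : ∀ z ∈ C, ⟪z, A (η - e η)⟫ = 0 := by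
    intro z hz
    have hadj : ⟪(ContinuousLinearMap.adjoint A) z, η - e η⟫ = ⟪z, A (η - e η)⟫ :=
      ContinuousLinearMap.adjoint_inner_left A _ z
    rw [← hadj]
    have hmem : star A z ∈ C := hA' z hz
    rw [← ContinuousLinearMap.star_eq_adjoint]
    exact hperp _ hmem
  calc (e * A) η = e (A (e η) + A (η - e η)) := by
        rw [ContinuousLinearMap.mul_apply, ← map_add, add_sub_cancel]
    _ = e (A (e η)) + e (A (η - e η)) := map_add _ _ _
    _ = A (e η) + 0 := by rw [hfix _ (hA _ (hran η)), hzero _ hAperp]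
    _ = (A * e) η := by simp

lemma star_mem_centralizer'' {S : Set (H →L[ℂ] H)} (hS : ∀ s ∈ S, star s ∈ S)
    {c : H →L[ℂ] H} (hc : c ∈ Set.centralizer S) : star c ∈ Set.centralizer S := by
  intro s hs
  have h := hc (star s) (hS s hs)
  have h2 := congrArg star h
  simp only [star_mul, star_star] at h2
  exact h2.symm

lemma mem_of_generated {S : Set (H →L[ℂ] H)} (N : VonNeumannAlgebra H)
    (hSN : S ⊆ (N : Set (H →L[ℂ] H))) {T : H →L[ℂ] H}
    (hT : T ∈ Set.centralizer (Set.centralizer S)) : T ∈ N := by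
  have h1 : Set.centralizer (N : Set (H →L[ℂ] H)) ⊆ Set.centralizer S :=
    Set.centralizer_subset hSN
  have h2 : Set.centralizer (Set.centralizer S)
      ⊆ Set.centralizer (Set.centralizer (N : Set (H →L[ℂ] H))) :=
    Set.centralizer_subset h1
  have h3 := h2 hT
  rwa [N.centralizer_centralizer] at h3

end IntertwinerAux


/-- The vector functional `x ↦ ⟪ξ, x ξ⟫` on bounded operators; when `ξ` is a tracial
cyclic separating unit vector for a von Neumann algebra `M`, this is the faithful normal
trace `τ` on `M`. -/
def trVec (ξ : H) (x : H →L[ℂ] H) : ℂ := inner ℂ ξ (x ξ)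

/-- `ξ` is a cyclic, separating, tracial unit vector for `M`.  This encodes: "`M` is a
finite von Neumann algebra with a faithful normal trace `τ = trVec ξ`, `τ(1) = 1`,
standardly represented on `H = L²(M, τ)`". -/
structure IsTracialStandardForm (M : VonNeumannAlgebra H) (ξ : H) : Prop where
  norm_eq_one : ‖ξ‖ = 1
  cyclic : Dense {y : H | ∃ x ∈ M, x ξ = y}
  separating : ∀ x ∈ M, x ξ = 0 → x = 0
  tracial : ∀ x ∈ M, ∀ y ∈ M, trVec ξ (x * y) = trVec ξ (y * x)

/-- An orthogonal projection, algebraically. -/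
def IsProjOp (p : H →L[ℂ] H) : Prop := IsSelfAdjoint p ∧ p * p = p

/-- `v` is an intertwiner of `B` in `M`: a partial isometry `v ∈ M` with `v B v* ⊆ B`
and `v* v ∈ B`.  The set of such `v` is `GN⁽¹⁾_M(B)`. -/
def IsIntertwiner (B M : VonNeumannAlgebra H) (v : H →L[ℂ] H) : Prop :=
  v ∈ M ∧ v * star v * v = v ∧ (∀ b ∈ B, v * b * star v ∈ B) ∧ star v * v ∈ B

/-- `v` is a groupoid normalizer of `B` in `M`: a partial isometry `v ∈ M` with
`v B v* ⊆ B` and `v* B v ⊆ B`.  The set of such `v` is `GN_M(B)`. -/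
def IsGroupoidNormalizer (B M : VonNeumannAlgebra H) (v : H →L[ℂ] H) : Prop :=
  v ∈ M ∧ v * star v * v = v ∧ (∀ b ∈ B, v * b * star v ∈ B) ∧
    (∀ b ∈ B, star v * b * v ∈ B)

/-- A strictly one-sided intertwiner: the only projection `p ∈ Z(B)v*v` with
`v p ∈ GN_M(B)` is `p = 0`. -/
def IsStrictlyOneSided (B M : VonNeumannAlgebra H) (v : H →L[ℂ] H) : Prop :=
  IsIntertwiner B M v ∧ ∀ z ∈ B, (∀ b ∈ B, z * b = b * z) →
    IsProjOp (z * (star v * v)) →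
    IsGroupoidNormalizer B M (v * (z * (star v * v))) → z * (star v * v) = 0

/-- `e` is the Jones projection `e_B`: the orthogonal projection of `H = L²(M)` onto
`L²(B)`, the closure of `B ξ`. -/
def IsJonesProjection (B : VonNeumannAlgebra H) (ξ : H) (e : H →L[ℂ] H) : Prop :=
  IsSelfAdjoint e ∧ e * e = e ∧
    (∀ y : H, e y ∈ closure {z : H | ∃ b ∈ B, b ξ = z}) ∧
    (∀ z ∈ closure {z : H | ∃ b ∈ B, b ξ = z}, e z = z)

/-- `N = ⟨M, e_B⟩` is the basic construction: the von Neumann algebra generated by `M`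
and the Jones projection `e`. -/
def IsBasicConstruction (M : VonNeumannAlgebra H) (e : H →L[ℂ] H)
    (N : VonNeumannAlgebra H) : Prop :=
  (∀ x ∈ M, x ∈ N) ∧ e ∈ N ∧
    ∀ N' : VonNeumannAlgebra H, (∀ x ∈ M, x ∈ N') → e ∈ N' → ∀ t ∈ N, t ∈ N'

/-- Membership in the relative commutant `B' ∩ N`. -/
def InRelCommutant (B N : VonNeumannAlgebra H) (x : H →L[ℂ] H) : Prop :=
  x ∈ N ∧ ∀ b ∈ B, b * x = x * b

/-- Membership in the center `Z(B' ∩ N)` of the relative commutant. -/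
def InCenterRelCommutant (B N : VonNeumannAlgebra H) (z : H →L[ℂ] H) : Prop :=
  InRelCommutant B N z ∧ ∀ x : H →L[ℂ] H, InRelCommutant B N x → z * x = x * z

/-- `Tr` is the canonical faithful normal semifinite trace on the basic construction
`N = ⟨M, e_B⟩`, determined by `Tr(x e_B y) = τ(x y)` for `x, y ∈ M` (recorded here in the
positive form `Tr(x e_B x*) = τ(x x*)`); normality is recorded by exhibiting `Tr` as a
countable sum of vector states. -/
structure IsCanonicalTrace (M N : VonNeumannAlgebra H) (ξ : H) (e : H →L[ℂ] H)
    (Tr : (H →L[ℂ] H) → ℝ≥0∞) : Prop where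
  additive : ∀ s t : H →L[ℂ] H, s.IsPositive → t.IsPositive → Tr (s + t) = Tr s + Tr t
  normal : ∃ η : ℕ → H, ∀ t : H →L[ℂ] H, t.IsPositive →
      Tr t = ∑' i, ENNReal.ofReal ((inner ℂ (η i) (t (η i)) : ℂ).re)
  tracial : ∀ t ∈ N, Tr (star t * t) = Tr (t * star t)
  faithful : ∀ t ∈ N, t.IsPositive → Tr t = 0 → t = 0
  jones : ∀ x ∈ M, Tr (x * e * star x) = ENNReal.ofReal ((trVec ξ (x * star x)).re)

/-- The von Neumann algebra generated by a set `S` of operators, as a set: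
the double commutant of `S ∪ S*`. -/
def vNGen (S : Set (H →L[ℂ] H)) : Set (H →L[ℂ] H) :=
  Set.centralizer (Set.centralizer (S ∪ star '' S))

/-- `Θ` encodes the spatial tensor product: `Θ x y = x ⊗ y` acting on `K = H ⊗₂ H'`. -/
structure IsTensorEmbedding
    (Θ : (H →L[ℂ] H) → (H' →L[ℂ] H') → (K →L[ℂ] K)) : Prop where
  map_mul : ∀ x x' y y', Θ x y * Θ x' y' = Θ (x * x') (y * y')
  map_star : ∀ x y, star (Θ x y) = Θ (star x) (star y)
  map_one : Θ 1 1 = 1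
  map_add_left : ∀ x x' y, Θ (x + x') y = Θ x y + Θ x' y
  map_add_right : ∀ x y y', Θ x (y + y') = Θ x y + Θ x y'
  map_smul_left : ∀ (c : ℂ) x y, Θ (c • x) y = c • Θ x y
  map_smul_right : ∀ (c : ℂ) x y, Θ x (c • y) = c • Θ x y

/-- **Lemma 3.1.**  Let `B` be a von Neumann subalgebra of a finite von Neumann algebra
`M` and let `v ∈ GN⁽¹⁾_M(B)`.
(1) `v* e_B v` is a projection in `(B' ∩ ⟨M, e_B⟩) v*v`, i.e. it is a projection in
`⟨M, e_B⟩` commuting with `v*v B v*v` and dominated by `v*v`.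
(2) For a projection `q ∈ B`, `v* e_B v` lies in `(B' ∩ ⟨M, e_B⟩) q` if and only if
`v*v ∈ Z(B) q`. -/
theorem intertwiner_jones_projection
    [TopologicalSpace.SeparableSpace H]
    (M B N : VonNeumannAlgebra H) (ξ : H) (e : H →L[ℂ] H)
    (hstd : IsTracialStandardForm M ξ)
    (hBM : ∀ x ∈ B, x ∈ M)
    (he : IsJonesProjection B ξ e)
    (hN : IsBasicConstruction M e N)
    (v : H →L[ℂ] H) (hv : IsIntertwiner B M v) :
    (IsProjOp (star v * e * v) ∧ star v * e * v ∈ N ∧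
      (star v * e * v) * (star v * v) = star v * e * v ∧
      (star v * v) * (star v * e * v) = star v * e * v ∧
      (∀ b ∈ B, (star v * e * v) * ((star v * v) * b * (star v * v)) =
        ((star v * v) * b * (star v * v)) * (star v * e * v))) ∧
    (∀ q ∈ B, IsProjOp q →
      ((∃ T : H →L[ℂ] H, InRelCommutant B N T ∧ star v * e * v = T * q) ↔
        (∃ z ∈ B, (∀ b ∈ B, z * b = b * z) ∧ star v * v = z * q))) := by
  classical
  obtain ⟨hvM, hvv, hmapB, hwB⟩ := hv
  obtain ⟨hesa, hee, heran, hefix⟩ := he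
  have hvv' : v * (star v * v) = v := by rw [← mul_assoc]; exact hvv
  have hvsv : star v * (v * star v) = star v := by
    have h := congrArg star hvv
    simpa [star_mul, star_star, mul_assoc] using h
  have huB : v * star v ∈ B := by
    have h := hmapB _ hwB
    rwa [hvv'] at h
  -- e commutes with B
  have hBinv : ∀ b, b ∈ B → ∀ z ∈ closure {z : H | ∃ b' ∈ B, b' ξ = z},
      b z ∈ closure {z : H | ∃ b' ∈ B, b' ξ = z} := by
    intro b hb z hz
    have h1 : b z ∈ closure (b '' {z : H | ∃ b' ∈ B, b' ξ = z}) :=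
      image_closure_subset_closure_image b.continuous ⟨z, hz, rfl⟩
    refine closure_mono ?_ h1
    rintro _ ⟨y, ⟨b', hb', rfl⟩, rfl⟩
    exact ⟨b * b', mul_mem hb hb', rfl⟩
  have heB : ∀ b, b ∈ B → e * b = b * e := fun b hb =>
    IntertwinerAux.comm_of_invariant e b hesa hee heran hefix (hBinv b hb)
      (hBinv _ (star_mem hb))
  have hξC : ξ ∈ closure {z : H | ∃ b' ∈ B, b' ξ = z} :=
    subset_closure ⟨1, one_mem B, by simp⟩
  have heξ : e ξ = ξ := hefix ξ hξC
  have ekill : ∀ x : H →L[ℂ] H, x ∈ M → e * x = 0 → x = 0 := by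
    intro x hx h
    have h1 : star x * e = 0 := by
      have h2 := congrArg star h
      simpa [star_mul, hesa.star_eq] using h2
    have h2 : (star x) ξ = 0 := by
      have h3 := congrArg (fun T : H →L[ℂ] H => T ξ) h1
      simp only [ContinuousLinearMap.mul_apply, ContinuousLinearMap.zero_apply, heξ] at h3
      exact h3
    have h4 : star x = 0 := hstd.separating _ (star_mem hx) h2
    have h5 := congrArg star h4
    simpa using h5
  have hevv : e * (v * star v) = v * star v * e := heB _ huB
  -- part 1 identities
  have hp_sa : star (star v * e * v) = star v * e * v := by
    simp [star_mul, star_star, hesa.star_eq, mul_assoc]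
  have hpp : (star v * e * v) * (star v * e * v) = star v * e * v := by
    calc (star v * e * v) * (star v * e * v)
        = star v * (e * (v * star v)) * (e * v) := by noncomm_ring
      _ = star v * (v * star v * e) * (e * v) := by rw [hevv]
      _ = star v * (v * star v) * (e * e) * v := by noncomm_ring
      _ = star v * (v * star v) * e * v := by rw [hee]
      _ = star v * e * v := by rw [hvsv]
  have hpw : (star v * e * v) * (star v * v) = star v * e * v := by
    calc (star v * e * v) * (star v * v) = star v * e * (v * star v * v) := by noncomm_ring
      _ = star v * e * v := by rw [hvv]
  have hwp : (star v * v) * (star v * e * v) = star v * e * v := by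
    calc (star v * v) * (star v * e * v)
        = star v * (v * star v * e) * v := by noncomm_ring
      _ = star v * (e * (v * star v)) * v := by rw [← hevv]
      _ = star v * e * (v * star v * v) := by noncomm_ring
      _ = star v * e * v := by rw [hvv]
  have hcomm1 : ∀ b, b ∈ B →
      (star v * e * v) * (star v * v * b * (star v * v))
        = (star v * v * b * (star v * v)) * (star v * e * v) := by
    intro b hb
    have hvbvB : v * b * star v ∈ B := hmapB b hb
    have hevbv : e * (v * b * star v) = v * b * star v * e := heB _ hvbvB
    have hL : (star v * e * v) * (star v * v * b * (star v * v))
        = star v * (v * b * star v) * e * v := by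
      calc (star v * e * v) * (star v * v * b * (star v * v))
          = star v * (e * (v * star v)) * ((v * b * star v) * v) := by noncomm_ring
        _ = star v * (v * star v * e) * ((v * b * star v) * v) := by rw [hevv]
        _ = star v * (v * star v) * (e * (v * b * star v)) * v := by noncomm_ring
        _ = star v * (v * star v) * (v * b * star v * e) * v := by rw [hevbv]
        _ = star v * (v * star v) * (v * b * star v) * e * v := by noncomm_ring
        _ = star v * (v * b * star v) * e * v := by rw [hvsv]
    have hR : (star v * v * b * (star v * v)) * (star v * e * v)
        = star v * (v * b * star v) * e * v := by
      calc (star v * v * b * (star v * v)) * (star v * e * v)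
          = star v * v * b * (star v * (v * star v)) * (e * v) := by noncomm_ring
        _ = star v * v * b * star v * (e * v) := by rw [hvsv]
        _ = star v * (v * b * star v) * e * v := by noncomm_ring
    exact hL.trans hR.symm
  have hpN : star v * e * v ∈ N :=
    mul_mem (mul_mem (star_mem (hN.1 v hvM)) hN.2.1) (hN.1 v hvM)
  refine ⟨⟨⟨hp_sa, hpp⟩, hpN, hpw, hwp, hcomm1⟩, ?_⟩
  intro q hqB hq
  obtain ⟨hq_sa, hq2⟩ := hq
  have hqM : q ∈ M := hBM q hqB
  constructor
  · -- forward direction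
    rintro ⟨T, ⟨hTN, hTb⟩, hTqEq⟩
    have hqT : q * T = T * q := hTb q hqB
    have hpq : (star v * e * v) * q = star v * e * v := by
      rw [hTqEq, mul_assoc, hq2]
    have hqp : q * (star v * e * v) = star v * e * v := by
      rw [hTqEq, ← mul_assoc, hqT, mul_assoc, hq2]
    have hvp : v * (star v * e * v) = e * v := by
      calc v * (star v * e * v) = (v * star v * e) * v := by noncomm_ring
        _ = (e * (v * star v)) * v := by rw [← hevv]
        _ = e * (v * star v * v) := by noncomm_ring
        _ = e * v := by rw [hvv]
    have hvq : v * q = v := by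
      have h1 : e * (v * q - v) = 0 := by
        have h2 : e * (v * q) = e * v := by
          calc e * (v * q) = (e * v) * q := by rw [mul_assoc]
            _ = (v * (star v * e * v)) * q := by rw [hvp]
            _ = v * ((star v * e * v) * q) := by rw [mul_assoc]
            _ = v * (star v * e * v) := by rw [hpq]
            _ = e * v := hvp
        rw [mul_sub, h2, sub_self]
      have h3 : v * q - v = 0 := ekill _ (sub_mem (mul_mem hvM hqM) hvM) h1
      exact sub_eq_zero.mp h3
    have hwq : (star v * v) * q = star v * v := by
      rw [mul_assoc, hvq]
    have hwbq : ∀ b, b ∈ B → star v * v * (b * q) = star v * v * (b * (star v * v)) := by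
      intro b hb
      have hqbB : q * b ∈ B := mul_mem hqB hb
      have hF : (star v * e * v) * b * q = q * b * (star v * e * v) := by
        rw [hTqEq]
        calc T * q * b * q = (T * q) * (b * q) := by noncomm_ring
          _ = (q * T) * (b * q) := by rw [hqT]
          _ = q * ((T * b) * q) := by noncomm_ring
          _ = q * ((b * T) * q) := by rw [← hTb b hb]
          _ = q * b * (T * q) := by noncomm_ring
      have hc : v * (q * b) * star v ∈ B := hmapB _ hqbB
      have hec : e * (v * (q * b) * star v) = v * (q * b) * star v * e := heB _ hc
      have hev1 : e * (v * (b * q)) = e * (v * (q * b * (star v * v))) := by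
        calc e * (v * (b * q)) = (e * v) * (b * q) := by noncomm_ring
          _ = (v * (star v * e * v)) * (b * q) := by rw [hvp]
          _ = v * ((star v * e * v) * b * q) := by noncomm_ring
          _ = v * (q * b * (star v * e * v)) := by rw [hF]
          _ = ((v * (q * b) * star v) * e) * v := by noncomm_ring
          _ = (e * (v * (q * b) * star v)) * v := by rw [hec]
          _ = e * (v * (q * b * (star v * v))) := by noncomm_ring
      have h0 : e * (v * (b * q) - v * (q * b * (star v * v))) = 0 := by
        rw [mul_sub, hev1, sub_self]
      have hx : v * (b * q) - v * (q * b * (star v * v)) = 0 := by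
        refine ekill _ ?_ h0
        have hbM : b ∈ M := hBM b hb
        have hwM : star v * v ∈ M := hBM _ hwB
        exact sub_mem (mul_mem hvM (mul_mem hbM hqM))
          (mul_mem hvM (mul_mem (mul_mem hqM hbM) hwM))
      have hx2 : v * (b * q) = v * (q * b * (star v * v)) := sub_eq_zero.mp hx
      calc star v * v * (b * q) = star v * (v * (b * q)) := by noncomm_ring
        _ = star v * (v * (q * b * (star v * v))) := by rw [hx2]
        _ = ((star v * v) * q) * (b * (star v * v)) := by noncomm_ring
        _ = star v * v * (b * (star v * v)) := by rw [hwq]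
    have hqbw : ∀ b, b ∈ B → q * b * (star v * v) = (star v * v) * b * (star v * v) := by
      intro b hb
      have h := hwbq (star b) (star_mem hb)
      have h2 := congrArg star h
      simp only [star_mul, star_star, hq_sa.star_eq] at h2
      exact h2
    -- construct z as the projection onto the closed span of B (star v * v) H
    set G0 : Set H := {y : H | ∃ b ∈ B, ∃ η : H, y = b ((star v * v) η)} with hG0
    have hG0mem : ∀ {x}, x ∈ G0 → x ∈ (Submodule.span ℂ G0).topologicalClosure := fun hx =>
      Submodule.le_topologicalClosure _ (Submodule.subset_span hx)
    have hG0inv_b : ∀ b, b ∈ B → ∀ x ∈ (Submodule.span ℂ G0).topologicalClosure,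
        b x ∈ (Submodule.span ℂ G0).topologicalClosure := by
      intro b hb
      refine IntertwinerAux.mapsTo_closureSpan b ?_
      rintro x ⟨b', hb', η, rfl⟩
      exact hG0mem ⟨b * b', mul_mem hb hb', η, rfl⟩
    have hG0inv_c : ∀ c ∈ Set.centralizer (B : Set (H →L[ℂ] H)),
        ∀ x ∈ (Submodule.span ℂ G0).topologicalClosure,
        c x ∈ (Submodule.span ℂ G0).topologicalClosure := by
      intro c hc
      refine IntertwinerAux.mapsTo_closureSpan c ?_
      rintro x ⟨b', hb', η, rfl⟩
      refine hG0mem ⟨b', hb', c η, ?_⟩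
      have hbw : (b' * (star v * v)) ∈ B := mul_mem hb' hwB
      have hcc := hc _ hbw
      have h5 := congrArg (fun T : H →L[ℂ] H => T η) hcc
      simpa [ContinuousLinearMap.mul_apply] using h5.symm
    have hz_sa : star (IntertwinerAux.projOf (Submodule.span ℂ G0).topologicalClosure)
        = IntertwinerAux.projOf (Submodule.span ℂ G0).topologicalClosure :=
      (IntertwinerAux.projOf_isSelfAdjoint _).star_eq
    set z : H →L[ℂ] H := IntertwinerAux.projOf (Submodule.span ℂ G0).topologicalClosure with hzdef
    have hBstar : ∀ s ∈ (B : Set (H →L[ℂ] H)), star s ∈ (B : Set (H →L[ℂ] H)) :=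
      fun s hs => star_mem hs
    have hzB : z ∈ B := by
      have hz' : z ∈ Set.centralizer (Set.centralizer (B : Set (H →L[ℂ] H))) := by
        intro c hc
        exact IntertwinerAux.projOf_comm _ (hG0inv_c c hc)
          (hG0inv_c _ (IntertwinerAux.star_mem_centralizer'' hBstar hc))
      rwa [B.centralizer_centralizer] at hz'
    have hzcomm : ∀ b ∈ B, z * b = b * z := fun b hb =>
      (IntertwinerAux.projOf_comm _ (hG0inv_b b hb) (hG0inv_b _ (star_mem hb))).symm
    have hzw : z * (star v * v) = star v * v := by
      ext η
      show z ((star v * v) η) = (star v * v) η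
      exact IntertwinerAux.projOf_eq_self _ (hG0mem ⟨1, one_mem B, η, by simp⟩)
    have hqwz : (q - star v * v) * z = 0 := by
      ext η
      show (q - star v * v) (z η) = 0
      refine IntertwinerAux.eqZero_on_closureSpan (q - star v * v) ?_ _
        (IntertwinerAux.projOf_apply_mem _ η)
      rintro x ⟨b', hb', η', rfl⟩
      have hop : (q - star v * v) * (b' * (star v * v)) = 0 := by
        rw [sub_mul]
        have h1 : q * (b' * (star v * v)) = q * b' * (star v * v) := by noncomm_ring
        have h2 : (star v * v) * (b' * (star v * v))
            = (star v * v) * b' * (star v * v) := by noncomm_ring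
        rw [h1, h2, hqbw b' hb', sub_self]
      have h7 := congrArg (fun T : H →L[ℂ] H => T η') hop
      simpa [ContinuousLinearMap.mul_apply] using h7
    have hw_sa : star (star v * v) = star v * v := by simp [star_mul, star_star]
    have h0 : z * (q - star v * v) = 0 := by
      have h := congrArg star hqwz
      simpa [star_mul, star_sub, hz_sa, hq_sa.star_eq, hw_sa] using h
    refine ⟨z, hzB, hzcomm, ?_⟩
    calc star v * v = z * (star v * v) := hzw.symm
      _ = z * (star v * v) + z * (q - star v * v) := by rw [h0, add_zero]
      _ = z * ((star v * v) + (q - star v * v)) := by rw [mul_add]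
      _ = z * q := by rw [add_sub_cancel]
  · -- reverse direction
    rintro ⟨z, hzB, hzc, hwzq⟩
    have hzq_comm : z * q = q * z := hzc q hqB
    have hwq : (star v * v) * q = star v * v := by
      rw [hwzq, mul_assoc, hq2]
    have hqw : q * (star v * v) = star v * v := by
      rw [hwzq, ← mul_assoc, ← hzq_comm, mul_assoc, hq2]
    have hpq : (star v * e * v) * q = star v * e * v := by
      calc (star v * e * v) * q = ((star v * e * v) * (star v * v)) * q := by rw [hpw]
        _ = (star v * e * v) * ((star v * v) * q) := by rw [mul_assoc]
        _ = (star v * e * v) * (star v * v) := by rw [hwq]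
        _ = star v * e * v := hpw
    have hz2q : z * (z * q) = z * q := by
      have hww : (star v * v) * (star v * v) = star v * v := by
        calc (star v * v) * (star v * v) = star v * (v * star v * v) := by noncomm_ring
          _ = star v * v := by rw [hvv]
      have h0 : (z * q) * (z * q) = z * q := by rw [← hwzq]; exact hww
      calc z * (z * q) = z * (z * (q * q)) := by rw [hq2]
        _ = z * ((z * q) * q) := by rw [← mul_assoc z q q]
        _ = z * ((q * z) * q) := by rw [hzq_comm]
        _ = (z * q) * (z * q) := by noncomm_ring
        _ = z * q := h0
    have hqbw : ∀ b, b ∈ B → q * b * (star v * v) = (star v * v) * b * (star v * v) := by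
      intro b hb
      have hc := hzc _ (mul_mem hqB hb)
      have h1 : q * b * (star v * v) = z * (q * (b * q)) := by
        rw [hwzq]
        calc q * b * (z * q) = ((q * b) * z) * q := by noncomm_ring
          _ = (z * (q * b)) * q := by rw [hc]
          _ = z * (q * (b * q)) := by noncomm_ring
      have h2 : (star v * v) * b * (star v * v) = z * (q * (b * q)) := by
        rw [hwzq]
        calc (z * q) * b * (z * q) = z * (((q * b) * z) * q) := by noncomm_ring
          _ = z * ((z * (q * b)) * q) := by rw [hc]
          _ = (z * (z * q)) * (b * q) := by noncomm_ring
          _ = (z * q) * (b * q) := by rw [hz2q]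
          _ = z * (q * (b * q)) := by noncomm_ring
      rw [h1, h2]
    have hqbp : ∀ b, b ∈ B → q * (b * (star v * e * v))
        = (star v * e * v) * (star v * v * b * (star v * v)) := by
      intro b hb
      calc q * (b * (star v * e * v))
          = q * (b * ((star v * v) * (star v * e * v))) := by rw [hwp]
        _ = (q * b * (star v * v)) * (star v * e * v) := by noncomm_ring
        _ = ((star v * v) * b * (star v * v)) * (star v * e * v) := by rw [hqbw b hb]
        _ = (star v * e * v) * (star v * v * b * (star v * v)) := (hcomm1 b hb).symm
    -- the commuting set S = M ∪ {e}
    set S : Set (H →L[ℂ] H) := (M : Set (H →L[ℂ] H)) ∪ {e} with hSdef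
    have hSstar : ∀ s ∈ S, star s ∈ S := by
      rintro s (hs | hs)
      · exact Or.inl (star_mem hs)
      · rw [Set.mem_singleton_iff] at hs
        subst hs
        exact Or.inr (by rw [Set.mem_singleton_iff, hesa.star_eq])
    have hvS : v ∈ S := Or.inl hvM
    have hsvS : star v ∈ S := Or.inl (star_mem hvM)
    have heSm : e ∈ S := Or.inr rfl
    have hpc : ∀ c ∈ Set.centralizer S, c * (star v * e * v) = (star v * e * v) * c := by
      intro c hc
      have h1 : v * c = c * v := hc v hvS
      have h2 : star v * c = c * star v := hc (star v) hsvS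
      have h3 : e * c = c * e := hc e heSm
      calc c * (star v * e * v) = (c * star v) * (e * v) := by noncomm_ring
        _ = (star v * c) * (e * v) := by rw [h2]
        _ = star v * (c * e) * v := by noncomm_ring
        _ = star v * (e * c) * v := by rw [h3]
        _ = (star v * e) * (c * v) := by noncomm_ring
        _ = (star v * e) * (v * c) := by rw [h1]
        _ = (star v * e * v) * c := by noncomm_ring
    set G1 : Set H := {y : H | ∃ c ∈ Set.centralizer S, ∃ η : H,
      y = c ((star v * e * v) η)} with hG1def
    set G2 : Set H := {y : H | ∃ b ∈ B, ∃ c ∈ Set.centralizer S, ∃ η : H,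
      y = b (c ((star v * e * v) η))} with hG2def
    have hG1mem : ∀ {x}, x ∈ G1 → x ∈ (Submodule.span ℂ G1).topologicalClosure := fun hx =>
      Submodule.le_topologicalClosure _ (Submodule.subset_span hx)
    have hG2mem : ∀ {x}, x ∈ G2 → x ∈ (Submodule.span ℂ G2).topologicalClosure := fun hx =>
      Submodule.le_topologicalClosure _ (Submodule.subset_span hx)
    have hbK2 : ∀ b, b ∈ B → ∀ x ∈ (Submodule.span ℂ G2).topologicalClosure,
        b x ∈ (Submodule.span ℂ G2).topologicalClosure := by
      intro b hb
      refine IntertwinerAux.mapsTo_closureSpan b ?_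
      rintro x ⟨b', hb', c, hc, η, rfl⟩
      exact hG2mem ⟨b * b', mul_mem hb hb', c, hc, η, rfl⟩
    have hcK2 : ∀ c ∈ Set.centralizer S, ∀ x ∈ (Submodule.span ℂ G2).topologicalClosure,
        c x ∈ (Submodule.span ℂ G2).topologicalClosure := by
      intro c hc
      refine IntertwinerAux.mapsTo_closureSpan c ?_
      rintro x ⟨b', hb', c', hc', η, rfl⟩
      refine hG2mem ⟨b', hb', c * c', Set.mul_mem_centralizer hc hc', η, ?_⟩
      have hcb := hc b' (Or.inl (hBM b' hb'))
      have h5 := congrArg (fun T : H →L[ℂ] H => T (c' ((star v * e * v) η))) hcb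
      simp only [ContinuousLinearMap.mul_apply] at h5
      show c (b' (c' ((star v * e * v) η))) = b' ((c * c') ((star v * e * v) η))
      simp only [ContinuousLinearMap.mul_apply]
      exact h5.symm
    set T : H →L[ℂ] H := IntertwinerAux.projOf (Submodule.span ℂ G2).topologicalClosure
      with hTdef
    have hT_sa : star T = T := (IntertwinerAux.projOf_isSelfAdjoint _).star_eq
    have hTb : ∀ b ∈ B, b * T = T * b := fun b hb =>
      IntertwinerAux.projOf_comm _ (hbK2 b hb) (hbK2 _ (star_mem hb))
    have hTN : T ∈ N := by
      refine IntertwinerAux.mem_of_generated (S := S) N ?_ ?_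
      · rintro s (hs | hs)
        · exact hN.1 s hs
        · rw [Set.mem_singleton_iff] at hs; subst hs; exact hN.2.1
      · intro c hc
        exact IntertwinerAux.projOf_comm _ (hcK2 c hc)
          (hcK2 _ (IntertwinerAux.star_mem_centralizer'' hSstar hc))
    have hpK2 : ∀ η : H, (star v * e * v) η ∈ (Submodule.span ℂ G2).topologicalClosure :=
      fun η => hG2mem ⟨1, one_mem B, 1, Set.one_mem_centralizer, η, by simp⟩
    have hTp : T * (star v * e * v) = star v * e * v := by
      ext η
      show T ((star v * e * v) η) = (star v * e * v) η
      exact IntertwinerAux.projOf_eq_self _ (hpK2 η)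
    have hpT : (star v * e * v) * T = star v * e * v := by
      have h := congrArg star hTp
      rwa [star_mul, hT_sa, hp_sa] at h
    have hqK1 : ∀ x ∈ (Submodule.span ℂ G2).topologicalClosure,
        q x ∈ (Submodule.span ℂ G1).topologicalClosure := by
      refine IntertwinerAux.mapsTo_closureSpan q ?_
      rintro x ⟨b', hb', c, hc, η, rfl⟩
      refine hG1mem ⟨c, hc, (star v * v * b' * (star v * v)) η, ?_⟩
      have hqbM : q * b' ∈ M := mul_mem hqM (hBM b' hb')
      have hcq : (q * b') * c = c * (q * b') := hc _ (Or.inl hqbM)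
      have hop : q * (b' * (c * (star v * e * v)))
          = c * ((star v * e * v) * (star v * v * b' * (star v * v))) := by
        calc q * (b' * (c * (star v * e * v)))
            = ((q * b') * c) * (star v * e * v) := by noncomm_ring
          _ = (c * (q * b')) * (star v * e * v) := by rw [hcq]
          _ = c * (q * (b' * (star v * e * v))) := by noncomm_ring
          _ = c * ((star v * e * v) * (star v * v * b' * (star v * v))) := by
              rw [hqbp b' hb']
      have h5 := congrArg (fun Tt : H →L[ℂ] H => Tt η) hop
      simpa [ContinuousLinearMap.mul_apply] using h5
    have hfixK1 : ∀ x ∈ (Submodule.span ℂ G1).topologicalClosure, (star v * e * v) x = x := by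
      intro x hx
      have h6 : ((star v * e * v) - 1) x = 0 := by
        refine IntertwinerAux.eqZero_on_closureSpan _ ?_ x hx
        rintro y ⟨c, hc, η, rfl⟩
        have hop : ((star v * e * v) - 1) * (c * (star v * e * v)) = 0 := by
          have hstep : (star v * e * v) * (c * (star v * e * v)) = c * (star v * e * v) := by
            calc (star v * e * v) * (c * (star v * e * v))
                = ((star v * e * v) * c) * (star v * e * v) := by noncomm_ring
              _ = (c * (star v * e * v)) * (star v * e * v) := by rw [← hpc c hc]
              _ = c * ((star v * e * v) * (star v * e * v)) := by noncomm_ring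
              _ = c * (star v * e * v) := by rw [hpp]
          rw [sub_mul, one_mul, hstep, sub_self]
        have h7 := congrArg (fun Tt : H →L[ℂ] H => Tt η) hop
        simpa [ContinuousLinearMap.mul_apply] using h7
      have h8 : (star v * e * v) x - x = 0 := by
        simpa [ContinuousLinearMap.sub_apply] using h6
      exact sub_eq_zero.mp h8
    have hK1K2 : ∀ x ∈ (Submodule.span ℂ G1).topologicalClosure,
        x ∈ (Submodule.span ℂ G2).topologicalClosure := by
      have hsub : G1 ⊆ G2 := by
        rintro x ⟨c, hc, η, rfl⟩
        exact ⟨1, one_mem B, c, hc, η, by simp⟩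
      intro x hx
      exact Submodule.topologicalClosure_mono (Submodule.span_mono hsub) hx
    have hqT : q * T = T * q := by
      refine IntertwinerAux.projOf_comm _ (fun x hx => hK1K2 _ (hqK1 x hx)) ?_
      intro x hx
      rw [hq_sa.star_eq]
      exact hK1K2 _ (hqK1 x hx)
    have hkey : q * T = star v * e * v := by
      ext η
      show q (T η) = (star v * e * v) η
      have h1 : q (T η) ∈ (Submodule.span ℂ G1).topologicalClosure :=
        hqK1 _ (IntertwinerAux.projOf_apply_mem _ η)
      have h2 : (star v * e * v) (q (T η)) = q (T η) := hfixK1 _ h1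
      have h3 : (star v * e * v) (q (T η)) = (star v * e * v) (T η) := by
        have h := congrArg (fun Tt : H →L[ℂ] H => Tt (T η)) hpq
        simpa [ContinuousLinearMap.mul_apply] using h
      have h4 : (star v * e * v) (T η) = (star v * e * v) η := by
        have h := congrArg (fun Tt : H →L[ℂ] H => Tt η) hpT
        simpa [ContinuousLinearMap.mul_apply] using h
      rw [← h2, h3, h4]
    exact ⟨T, ⟨hTN, hTb⟩, by rw [← hkey, hqT]⟩
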